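/- Asymptotic jury theorem: for p ∈ (1/2, 1], the probability p_n that a strict majority of n i.i.d. Bernoulli(p) votes is correct tends to 1 as n → ∞ (along odd n). -/
import Mathlib


/-- The probability that a strict majority of `n` i.i.d. votes, each correct with
probability `p`, is correct (for odd `n`):
`p_n = ∑_{h=(n+1)/2}^{n} C(n,h) p^h (1-p)^(n-h)`. -/
noncomputable def majProb (p : ℝ) (n : ℕ) : ℝ :=
  ∑ h ∈ Finset.Icc ((n + 1) / 2) n, (n.choose h : ℝ) * p ^ h * (1 - p) ^ (n - h)

open Filter

/-- Asymptotic jury theorem: along odd `n`, the majority accuracy tends to 1. -/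
theorem jury_asymptotic (p : ℝ) (hp : 1 / 2 < p) (hp1 : p ≤ 1) :
    Tendsto (fun k : ℕ => majProb p (2 * k + 1)) atTop (nhds 1) := by
  set q : ℝ := 1 - p with hq
  have hq0 : 0 ≤ q := by simp only [hq]; linarith
  have hqp : q ≤ p := by simp only [hq]; linarith
  have hp0 : 0 ≤ p := by linarith
  have h2q : 2 * q ≤ 1 := by simp only [hq]; linarith
  -- the minority tail
  set S : ℕ → ℝ := fun k => ∑ h ∈ Finset.range (k + 1),
    ((2 * k + 1).choose h : ℝ) * p ^ h * q ^ (2 * k + 1 - h) with hS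
  have key : ∀ k, majProb p (2 * k + 1) = 1 - S k := by
    intro k
    have hfull : ∑ h ∈ Finset.range (2 * k + 1 + 1),
        ((2 * k + 1).choose h : ℝ) * p ^ h * q ^ (2 * k + 1 - h) = 1 := by
      have hap := add_pow p q (2 * k + 1)
      have hpq : p + q = 1 := by simp [hq]
      rw [hpq, one_pow] at hap
      rw [hap]
      exact Finset.sum_congr rfl (fun h _ => by ring)
    have hsplit : S k + ∑ h ∈ Finset.Ico (k + 1) (2 * k + 1 + 1),
        ((2 * k + 1).choose h : ℝ) * p ^ h * q ^ (2 * k + 1 - h) = 1 := by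
      rw [hS]
      simp only [Finset.range_eq_Ico]
      rw [Finset.sum_Ico_consecutive _ (by omega) (by omega)]
      rw [← Finset.range_eq_Ico] at *
      exact hfull
    have hIcc : Finset.Icc ((2 * k + 1 + 1) / 2) (2 * k + 1) =
        Finset.Ico (k + 1) (2 * k + 1 + 1) := by
      rw [← Finset.Ico_add_one_right_eq_Icc]
      congr 1
      omega
    rw [majProb, hIcc, ← hq]
    linarith
  -- bound the tail
  have hbound : ∀ k, S k ≤ (4 * p * q) ^ k := by
    intro k
    have h1 : S k ≤ (∑ h ∈ Finset.range (k + 1), ((2 * k + 1).choose h : ℝ)) *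
        (p ^ k * q ^ (k + 1)) := by
      rw [Finset.sum_mul]
      apply Finset.sum_le_sum
      intro h hh
      rw [Finset.mem_range] at hh
      have hhk : h ≤ k := by omega
      have e1 : 2 * k + 1 - h = (k + 1) + (k - h) := by omega
      have e2 : p ^ h * q ^ (2 * k + 1 - h) ≤ p ^ k * q ^ (k + 1) := by
        rw [e1, pow_add]
        have : q ^ (k - h) ≤ p ^ (k - h) := pow_le_pow_left₀ hq0 hqp _
        calc p ^ h * (q ^ (k + 1) * q ^ (k - h))
            ≤ p ^ h * (q ^ (k + 1) * p ^ (k - h)) := by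
              apply mul_le_mul_of_nonneg_left (by
                exact mul_le_mul_of_nonneg_left this (pow_nonneg hq0 _))
                (pow_nonneg hp0 _)
          _ = p ^ (h + (k - h)) * q ^ (k + 1) := by rw [pow_add]; ring
          _ = p ^ k * q ^ (k + 1) := by rw [Nat.add_sub_cancel' hhk]
      calc ((2 * k + 1).choose h : ℝ) * p ^ h * q ^ (2 * k + 1 - h)
          = ((2 * k + 1).choose h : ℝ) * (p ^ h * q ^ (2 * k + 1 - h)) := by ring
        _ ≤ ((2 * k + 1).choose h : ℝ) * (p ^ k * q ^ (k + 1)) :=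
            mul_le_mul_of_nonneg_left e2 (Nat.cast_nonneg _)
    have h2 : (∑ h ∈ Finset.range (k + 1), ((2 * k + 1).choose h : ℝ)) ≤
        2 ^ (2 * k + 1) := by
      have hsub : (∑ h ∈ Finset.range (k + 1), ((2 * k + 1).choose h : ℝ)) ≤
          ∑ h ∈ Finset.range (2 * k + 1 + 1), ((2 * k + 1).choose h : ℝ) := by
        apply Finset.sum_le_sum_of_subset_of_nonneg
        · apply Finset.range_subset_range.2; omega
        · intro _ _ _; exact Nat.cast_nonneg _
      have htot : ∑ h ∈ Finset.range (2 * k + 1 + 1), ((2 * k + 1).choose h : ℝ)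
          = 2 ^ (2 * k + 1) := by
        rw [← Nat.cast_sum]
        rw [Nat.sum_range_choose]
        push_cast
        ring
      linarith
    have h3 : (2:ℝ) ^ (2 * k + 1) * (p ^ k * q ^ (k + 1)) = 2 * q * (4 * p * q) ^ k := by
      rw [show (2:ℝ) ^ (2 * k + 1) = 2 * 4 ^ k by
            rw [pow_succ, pow_mul]; norm_num; ring,
          show (4 * p * q) ^ k = 4 ^ k * p ^ k * q ^ k by
            rw [mul_pow, mul_pow],
          pow_succ]
      ring
    have hpk : 0 ≤ p ^ k * q ^ (k + 1) :=
      mul_nonneg (pow_nonneg hp0 _) (pow_nonneg hq0 _)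
    have h4 : S k ≤ 2 * q * (4 * p * q) ^ k := by
      calc S k ≤ (∑ h ∈ Finset.range (k + 1), ((2 * k + 1).choose h : ℝ)) *
          (p ^ k * q ^ (k + 1)) := h1
        _ ≤ 2 ^ (2 * k + 1) * (p ^ k * q ^ (k + 1)) :=
            mul_le_mul_of_nonneg_right h2 hpk
        _ = 2 * q * (4 * p * q) ^ k := h3
    have hpq4 : 0 ≤ (4 * p * q) ^ k := by positivity
    nlinarith [h4, hpq4]
  have hS0 : ∀ k, 0 ≤ S k := by
    intro k
    apply Finset.sum_nonneg
    intro h _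
    have : 0 ≤ p ^ h := pow_nonneg hp0 _
    have : 0 ≤ q ^ (2 * k + 1 - h) := pow_nonneg hq0 _
    positivity
  have h4pq : 4 * p * q < 1 := by nlinarith [sq_nonneg (2 * p - 1)]
  have h4pq0 : 0 ≤ 4 * p * q := by positivity
  have hgeom : Tendsto (fun k : ℕ => (4 * p * q) ^ k) atTop (nhds 0) :=
    tendsto_pow_atTop_nhds_zero_of_lt_one h4pq0 h4pq
  have hStend : Tendsto S atTop (nhds 0) :=
    squeeze_zero hS0 hbound hgeom
  have := (tendsto_const_nhds (x := (1:ℝ)) (f := atTop)).sub hStend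
  rw [sub_zero] at this
  simp only [key]
  exact this
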